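/- Fix x⁰ ∈ R^n and index i. Define R̲_i(x) = 1 − (∑_{j≠i} exp(xⱼ)) · exp(−LSE(x⁰) − ∇LSE(x⁰)·(x − x⁰)). Then the softmax component R_i(x) = exp(x_i)/∑ⱼ exp(xⱼ) satisfies R_i(x) ≥ R̲_i(x) for all x ∈ R^n. -/

import Mathlib

theorem softmax_lower_bound (n : ℕ) (x₀ : Fin n → ℝ) (i : Fin n) (x : Fin n → ℝ) :
    Real.exp (x i) / ∑ j, Real.exp (x j) ≥
      1 - (∑ j ∈ Finset.univ.erase i, Real.exp (x j)) *
        Real.exp (- Real.log (∑ j, Real.exp (x₀ j))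
          - ∑ j, (Real.exp (x₀ j) / ∑ k, Real.exp (x₀ k)) * (x j - x₀ j)) := by
  have hS0 : (0:ℝ) < ∑ j, Real.exp (x₀ j) :=
    Finset.sum_pos (fun j _ => Real.exp_pos _) ⟨i, Finset.mem_univ i⟩
  have hS : (0:ℝ) < ∑ j, Real.exp (x j) :=
    Finset.sum_pos (fun j _ => Real.exp_pos _) ⟨i, Finset.mem_univ i⟩
  set S : ℝ := ∑ j, Real.exp (x j) with hSdef
  set S0 : ℝ := ∑ j, Real.exp (x₀ j) with hS0def
  set a : ℝ := Real.log S0 + ∑ j, (Real.exp (x₀ j) / S0) * (x j - x₀ j) with ha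
  -- Jensen: exp (∑ w j * y j) ≤ ∑ w j * exp (y j) where w j = exp (x₀ j) / S0
  have hw1 : ∑ j, Real.exp (x₀ j) / S0 = 1 := by
    rw [← Finset.sum_div, div_self hS0.ne']
  have jensen : Real.exp (∑ j, (Real.exp (x₀ j) / S0) * (x j - x₀ j)) ≤
      ∑ j, (Real.exp (x₀ j) / S0) * Real.exp (x j - x₀ j) := by
    have := convexOn_exp.map_sum_le (t := Finset.univ)
      (w := fun j => Real.exp (x₀ j) / S0) (p := fun j => x j - x₀ j)
      (fun j _ => div_nonneg (Real.exp_pos _).le hS0.le) hw1 (fun j _ => trivial)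
    simpa [smul_eq_mul] using this
  have key : Real.exp a ≤ S := by
    rw [ha, Real.exp_add, Real.exp_log hS0]
    calc S0 * Real.exp (∑ j, (Real.exp (x₀ j) / S0) * (x j - x₀ j))
        ≤ S0 * ∑ j, (Real.exp (x₀ j) / S0) * Real.exp (x j - x₀ j) := by
          exact mul_le_mul_of_nonneg_left jensen hS0.le
      _ = S := by
          rw [Finset.mul_sum]
          apply Finset.sum_congr rfl
          intro j _
          rw [Real.exp_sub]
          field_simp
  have herase : Real.exp (x i) + ∑ j ∈ Finset.univ.erase i, Real.exp (x j) = S := by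
    exact Finset.add_sum_erase Finset.univ (fun j => Real.exp (x j)) (Finset.mem_univ i)
  have hSe : (0:ℝ) ≤ ∑ j ∈ Finset.univ.erase i, Real.exp (x j) :=
    Finset.sum_nonneg fun j _ => (Real.exp_pos _).le
  have hinv : 1 / S ≤ Real.exp (-Real.log S0 - ∑ j, (Real.exp (x₀ j) / S0) * (x j - x₀ j)) := by
    have : Real.exp (-Real.log S0 - ∑ j, (Real.exp (x₀ j) / S0) * (x j - x₀ j))
        = (Real.exp a)⁻¹ := by
      rw [← Real.exp_neg]; congr 1; rw [ha]; ring
    rw [this, one_div]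
    exact inv_anti₀ (Real.exp_pos _) key
  rw [ge_iff_le]
  have : Real.exp (x i) / S = 1 - (∑ j ∈ Finset.univ.erase i, Real.exp (x j)) / S := by
    rw [eq_sub_iff_add_eq, ← add_div, herase, div_self hS.ne']
  rw [this]
  apply sub_le_sub_left
  calc (∑ j ∈ Finset.univ.erase i, Real.exp (x j)) / S
      = (∑ j ∈ Finset.univ.erase i, Real.exp (x j)) * (1 / S) := by ring
    _ ≤ _ := mul_le_mul_of_nonneg_left hinv hSe
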